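/- arXiv:1701.04779 — 2 statements merged into one kernel-verified Lean document; each statement's English description precedes it below -/
import Mathlib

section
/- Let V be a finite-dimensional real normed vector space, v : V → V a locally Lipschitz map, and φ : ℝ → V → V a global flow of v; that is, φ(0, ·) is the identity, φ(s+t, x) = φ(s, φ(t, x)) for all s, t ∈ ℝ and x ∈ V, each map φ(t, ·) : V → V is continuous, and for every x ∈ V the curve t ↦ φ(t, x) is differentiable with derivative v(φ(t, x)) at every t. Let ν be a finite Borel measure on V such that v(x) = 0 for ν-almost every x ∈ V. Then for every t ∈ ℝ the pushforward measure φ(t, ·)_* ν equals ν. -/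
open MeasureTheory

/-- If `v` is a locally Lipschitz vector field on a finite-dimensional real normed space,
`φ` is a global flow of `v`, and `ν` is a finite Borel measure with `v = 0` ν-a.e.,
then every time-`t` map of the flow preserves `ν`. -/
theorem stmt_1 {V : Type*} [NormedAddCommGroup V] [NormedSpace ℝ V] [FiniteDimensional ℝ V]
    [MeasurableSpace V] [BorelSpace V]
    (v : V → V) (hv : LocallyLipschitz v)
    (φ : ℝ → V → V)
    (hφ0 : ∀ x, φ 0 x = x)
    (hφadd : ∀ s t : ℝ, ∀ x, φ (s + t) x = φ s (φ t x))
    (hφcont : ∀ t : ℝ, Continuous (φ t))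
    (hφderiv : ∀ x : V, ∀ t : ℝ, HasDerivAt (fun τ => φ τ x) (v (φ t x)) t)
    (ν : Measure V) [IsFiniteMeasure ν]
    (hν : ∀ᵐ x ∂ν, v x = 0) :
    ∀ t : ℝ, Measure.map (φ t) ν = ν := by
  -- every zero of v is a fixed point of the flow
  have key : ∀ x : V, v x = 0 → ∀ t : ℝ, φ t x = x := by
    intro x hx t
    set S : Set ℝ := {t | φ t x = x} with hS
    have hcont : Continuous fun τ => φ τ x := by
      have : Differentiable ℝ fun τ => φ τ x := fun τ => (hφderiv x τ).differentiableAt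
      exact this.continuous
    have hclosed : IsClosed S := isClosed_singleton.preimage hcont
    have hopen : IsOpen S := by
      rw [isOpen_iff_mem_nhds]
      intro t₀ ht₀
      obtain ⟨K, s, hs_nhds, hK⟩ := hv x
      have heq : (fun τ => φ τ x) =ᶠ[nhds t₀] (fun _ => x) := by
        apply ODE_solution_unique_of_eventually (v := fun _ : ℝ => v) (s := fun _ : ℝ => s)
          (Filter.Eventually.of_forall fun _ => hK)
        · -- derivative and membership for f = φ · x
          have hmem : ∀ᶠ τ in nhds t₀, φ τ x ∈ s := by
            have : φ t₀ x ∈ s := by rw [ht₀]; exact mem_of_mem_nhds hs_nhds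
            exact hcont.continuousAt.eventually_mem (by rw [ht₀] at this ⊢; exact hs_nhds)
          filter_upwards [hmem] with τ hτ
          exact ⟨hφderiv x τ, hτ⟩
        · filter_upwards with τ
          refine ⟨?_, mem_of_mem_nhds hs_nhds⟩
          simpa [hx] using hasDerivAt_const τ x
        · exact ht₀
      exact heq.mono fun τ hτ => hτ
    have : S = Set.univ := by
      rcases (isClopen_iff (s := S)).mp ⟨hclosed, hopen⟩ with h | h
      · exact absurd (show (0:ℝ) ∈ S from hφ0 x) (by simp [h])
      · exact h
    have := this ▸ Set.mem_univ t
    exact this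
  intro t
  have hae : φ t =ᵐ[ν] id := by
    filter_upwards [hν] with x hx
    exact key x hx t
  rw [Measure.map_congr hae, Measure.map_id]
end

section
/- Let 𝔤 be a real Lie algebra that, as a vector space, decomposes as a direct sum 𝔤 = 𝔨 ⊕ 𝔭 of subspaces satisfying [𝔨,𝔨] ⊆ 𝔨, [𝔨,𝔭] ⊆ 𝔭 and [𝔭,𝔭] ⊆ 𝔨. Let B : 𝔤 × 𝔤 → ℝ be a symmetric bilinear form that is invariant (B([x,y],z) + B(y,[x,z]) = 0 for all x, y, z ∈ 𝔤), negative definite on 𝔨, positive definite on 𝔭, and satisfies B(ξ,η) = 0 for all ξ ∈ 𝔨 and η ∈ 𝔭. If β₀ ∈ 𝔭 satisfies [β₀, ξ] = 0 for every ξ ∈ 𝔨, then [β₀, x] = 0 for every x ∈ 𝔤. -/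
/-- If `𝔤 = 𝔨 ⊕ 𝔭` is a vector-space direct sum with `[𝔨,𝔨] ⊆ 𝔨`, `[𝔨,𝔭] ⊆ 𝔭`,
`[𝔭,𝔭] ⊆ 𝔨`, and `B` is an invariant symmetric bilinear form, negative definite on `𝔨`,
positive definite on `𝔭`, with `B(𝔨,𝔭) = 0`, then any `β₀ ∈ 𝔭` centralizing `𝔨`
centralizes all of `𝔤`. -/
theorem stmt_2 {L : Type*} [LieRing L] [LieAlgebra ℝ L]
    (k p : Submodule ℝ L) (hcompl : IsCompl k p)
    (hkk : ∀ x ∈ k, ∀ y ∈ k, ⁅x, y⁆ ∈ k)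
    (hkp : ∀ x ∈ k, ∀ y ∈ p, ⁅x, y⁆ ∈ p)
    (hpp : ∀ x ∈ p, ∀ y ∈ p, ⁅x, y⁆ ∈ k)
    (B : LinearMap.BilinForm ℝ L)
    (hsymm : ∀ x y : L, B x y = B y x)
    (hinv : ∀ x y z : L, B ⁅x, y⁆ z + B y ⁅x, z⁆ = 0)
    (hkneg : ∀ x ∈ k, x ≠ 0 → B x x < 0)
    (hppos : ∀ x ∈ p, x ≠ 0 → 0 < B x x)
    (horth : ∀ ξ ∈ k, ∀ η ∈ p, B ξ η = 0)
    (β₀ : L) (hβ₀ : β₀ ∈ p) (hcomm : ∀ ξ ∈ k, ⁅β₀, ξ⁆ = 0) :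
    ∀ x : L, ⁅β₀, x⁆ = 0 := by
  -- First: β₀ kills p as well.
  have hp : ∀ η ∈ p, ⁅β₀, η⁆ = 0 := by
    intro η hη
    have hmem : ⁅β₀, η⁆ ∈ k := hpp β₀ hβ₀ η hη
    have hzero : B ⁅β₀, η⁆ ⁅β₀, η⁆ = 0 := by
      have h := hinv β₀ η ⁅β₀, η⁆
      rw [hcomm _ hmem] at h
      simpa using h
    by_contra hne
    exact absurd hzero (ne_of_lt (hkneg _ hmem hne))
  intro x
  obtain ⟨ξ, hξ, η, hη, rfl⟩ := Submodule.mem_sup.mp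
    (by rw [hcompl.sup_eq_top]; trivial : x ∈ k ⊔ p)
  rw [lie_add, hcomm ξ hξ, hp η hη, add_zero]
end
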